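/- (McDiarmid / bounded differences, the concentration step behind Rademacher bounds) Let f : Z^n → ℝ satisfy the bounded differences property with constants c_1,...,c_n: changing the i-th coordinate changes f by at most c_i. If Z_1,...,Z_n are independent Z-valued random variables, then for every t > 0, P( f(Z_1,...,Z_n) − E[f(Z_1,...,Z_n)] ≥ t ) ≤ exp( −2t² / ∑_{i=1}^n c_i² ). -/

import Mathlib

open MeasureTheory Real ProbabilityTheory

/-- Kernel inequality behind Hoeffding's lemma. -/
lemma hoeffding_kernel {p : ℝ} (hp0 : 0 ≤ p) (hp1 : p ≤ 1) (h : ℝ) :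
    1 - p + p * exp h ≤ exp (p * h + h ^ 2 / 8) := by
  rcases eq_or_lt_of_le hp1 with hp1' | hp1'
  · subst hp1'
    simp only [sub_self, zero_add, one_mul]
    exact exp_le_exp.2 (by nlinarith [sq_nonneg h])
  -- now p < 1
  set D : ℝ → ℝ := fun x => 1 - p + p * exp x with hD
  have hDpos : ∀ x, 0 < D x := fun x => by
    have := exp_pos x; simp only [hD]; nlinarith
  set ψ : ℝ → ℝ := fun x => p * x + x ^ 2 / 8 - log (D x) with hψ
  set ψ' : ℝ → ℝ := fun x => p + x / 4 - p * exp x / D x with hψ'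
  have hder : ∀ x, HasDerivAt ψ (ψ' x) x := by
    intro x
    have hDder : HasDerivAt D (p * exp x) x := by
      exact ((Real.hasDerivAt_exp x).const_mul p).const_add (1 - p)
    have hlog : HasDerivAt (fun y => log (D y)) (p * exp x / D x) x :=
      hDder.log (hDpos x).ne'
    have h1 : HasDerivAt (fun y => p * y + y ^ 2 / 8) (p + x / 4) x := by
      have := ((hasDerivAt_pow 2 x).div_const 8).const_add 0
      have h2 : HasDerivAt (fun y => p * y) p x := by
        simpa using (hasDerivAt_id x).const_mul p
      exact
        h2.add (((hasDerivAt_pow 2 x).div_const 8)) |>.congr_deriv (by ring)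
    exact h1.sub hlog
  have hder' : ∀ x, HasDerivAt ψ' (1 / 4 - p * (1 - p) * exp x / (D x) ^ 2) x := by
    intro x
    have hDder : HasDerivAt D (p * exp x) x := by
      exact ((Real.hasDerivAt_exp x).const_mul p).const_add (1 - p)
    have hnum : HasDerivAt (fun y => p * exp y) (p * exp x) x :=
      (Real.hasDerivAt_exp x).const_mul p
    have hdiv : HasDerivAt (fun y => p * exp y / D y)
        ((p * exp x * D x - p * exp x * (p * exp x)) / (D x) ^ 2) x :=
      hnum.div hDder (hDpos x).ne'
    have h1 : HasDerivAt (fun y => p + y / 4) (1 / 4) x := by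
      simpa using ((hasDerivAt_id x).div_const 4).const_add p
    have := h1.sub hdiv
    refine this.congr_deriv ?_
    have : p * exp x * D x - p * exp x * (p * exp x) = p * (1 - p) * exp x := by
      simp only [hD]; ring
    rw [this]
  have hsec : ∀ x, 0 ≤ 1 / 4 - p * (1 - p) * exp x / (D x) ^ 2 := by
    intro x
    have hx := exp_pos x
    have hD2 : (0:ℝ) < (D x) ^ 2 := pow_pos (hDpos x) 2
    have hDx : D x = 1 - p + p * exp x := rfl
    rw [sub_nonneg, div_le_iff₀ hD2, hDx]
    nlinarith [sq_nonneg (1 - p - p * exp x)]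
  have hψ'0 : ψ' 0 = 0 := by simp [hψ', hD]
  have hψ0 : ψ 0 = 0 := by simp [hψ, hD]
  -- ψ' monotone
  have hmono : Monotone ψ' := by
    apply monotone_of_deriv_nonneg
    · exact fun x => (hder' x).differentiableAt
    · intro x; rw [(hder' x).deriv]; exact hsec x
  have hnonneg : ∀ x, 0 ≤ ψ x := by
    intro x
    rcases le_total 0 x with hx | hx
    · have : MonotoneOn ψ (Set.Ici 0) := by
        apply monotoneOn_of_deriv_nonneg (convex_Ici 0)
          (Continuous.continuousOn (Differentiable.continuous
            (fun y => (hder y).differentiableAt)))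
        · intro y _; exact ((hder y).differentiableAt).differentiableWithinAt
        · intro y hy
          rw [(hder y).deriv]
          have : (0:ℝ) ≤ y := le_of_lt (by simpa using hy)
          calc (0:ℝ) = ψ' 0 := hψ'0.symm
          _ ≤ ψ' y := hmono this
      have := this (Set.self_mem_Ici) (Set.mem_Ici.2 hx) hx
      rwa [hψ0] at this
    · have : AntitoneOn ψ (Set.Iic 0) := by
        apply antitoneOn_of_deriv_nonpos (convex_Iic 0)
          (Continuous.continuousOn (Differentiable.continuous
            (fun y => (hder y).differentiableAt)))
        · intro y _; exact ((hder y).differentiableAt).differentiableWithinAt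
        · intro y hy
          rw [(hder y).deriv]
          have hy0 : y ≤ 0 := le_of_lt (by simpa using hy)
          calc ψ' y ≤ ψ' 0 := hmono hy0
          _ = 0 := hψ'0
      have := this (Set.mem_Iic.2 hx) (Set.self_mem_Iic) hx
      rwa [hψ0] at this
  have := hnonneg h
  have hlog : log (D h) ≤ p * h + h ^ 2 / 8 := by simp only [hψ] at this; linarith
  calc D h = exp (log (D h)) := (exp_log (hDpos h)).symm
  _ ≤ exp (p * h + h ^ 2 / 8) := exp_le_exp.2 hlog


/-- integrability of bounded measurable functions on finite measures -/
lemma integrable_of_bdd {α : Type*} [MeasurableSpace α] {μ : Measure α} [IsFiniteMeasure μ]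
    {g : α → ℝ} (hg : AEStronglyMeasurable g μ) {C : ℝ} (h : ∀ x, |g x| ≤ C) :
    Integrable g μ :=
  ⟨hg, HasFiniteIntegral.of_bounded (C := C) (Filter.Eventually.of_forall h)⟩

/-- Hoeffding's lemma. -/
lemma hoeffding_lemma {α : Type*} [MeasurableSpace α] (μ : Measure α) [IsProbabilityMeasure μ]
    {g : α → ℝ} (hg : Measurable g) {a b : ℝ} (hab : ∀ x, g x ∈ Set.Icc a b)
    (hmean : ∫ x, g x ∂μ = 0) (s : ℝ) :
    ∫ x, Real.exp (s * g x) ∂μ ≤ Real.exp (s ^ 2 * (b - a) ^ 2 / 8) := by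
  have hne : Nonempty α := by
    by_contra hn
    rw [not_nonempty_iff] at hn
    have : μ Set.univ = 0 := by simp [Set.univ_eq_empty_iff.2 hn]
    simp [measure_univ] at this
  obtain ⟨x₀⟩ := hne
  have hax : a ≤ b := le_trans (hab x₀).1 (hab x₀).2
  -- g integrable
  have hgint : Integrable g μ := integrable_of_bdd hg.aestronglyMeasurable
    (C := max |a| |b|) (fun x => abs_le.2 ⟨le_trans (neg_le_neg (le_max_left |a| |b|))
      (le_trans (neg_abs_le a) (hab x).1), le_trans (hab x).2 (le_trans (le_abs_self b)
      (le_max_right |a| |b|))⟩)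
  have ha0 : a ≤ 0 := by
    have : a ≤ ∫ x, g x ∂μ := by
      calc a = ∫ _, a ∂μ := by simp [measure_univ]
      _ ≤ ∫ x, g x ∂μ := integral_mono (integrable_const a) hgint (fun x => (hab x).1)
    linarith [hmean ▸ this]
  have hb0 : 0 ≤ b := by
    have : (∫ x, g x ∂μ) ≤ b := by
      calc (∫ x, g x ∂μ) ≤ ∫ _, b ∂μ :=
        integral_mono hgint (integrable_const b) (fun x => (hab x).2)
      _ = b := by simp [measure_univ]
    linarith [hmean ▸ this]
  rcases eq_or_lt_of_le hax with heq | hlt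
  · -- a = b, so g ≡ 0
    have ha : a = 0 := le_antisymm ha0 (by rw [heq]; exact hb0)
    have hb : b = 0 := by rw [← heq, ha]
    have hgz : ∀ x, g x = 0 := fun x =>
      le_antisymm (by rw [← hb]; exact (hab x).2) (by rw [← ha]; exact (hab x).1)
    simp only [hgz, mul_zero, Real.exp_zero]
    rw [integral_const]
    simp only [probReal_univ, smul_eq_mul, one_mul]
    rw [Real.one_le_exp_iff]
    positivity
  -- a < b
  set p : ℝ := -a / (b - a) with hp
  have hba : (0:ℝ) < b - a := by linarith
  have hp0 : 0 ≤ p := div_nonneg (by linarith) hba.le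
  have hp1 : p ≤ 1 := by
    rw [hp, div_le_one hba]; linarith
  set h : ℝ := s * (b - a) with hh
  -- pointwise convexity bound
  have hconv : ∀ x, Real.exp (s * g x) ≤
      ((b - g x) / (b - a)) * Real.exp (s * a) + ((g x - a) / (b - a)) * Real.exp (s * b) := by
    intro x
    have h1 : 0 ≤ (b - g x) / (b - a) := div_nonneg (by linarith [(hab x).2]) hba.le
    have h2 : 0 ≤ (g x - a) / (b - a) := div_nonneg (by linarith [(hab x).1]) hba.le
    have h3 : (b - g x) / (b - a) + (g x - a) / (b - a) = 1 := by
      field_simp; ring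
    have := convexOn_exp.2 (Set.mem_univ (s * a)) (Set.mem_univ (s * b)) h1 h2 h3
    have harg : (b - g x) / (b - a) * (s * a) + (g x - a) / (b - a) * (s * b) = s * g x := by
      field_simp; ring
    rw [smul_eq_mul, smul_eq_mul, smul_eq_mul, smul_eq_mul, harg] at this
    exact this
  -- integrate
  have hrint : Integrable (fun x => ((b - g x) / (b - a)) * Real.exp (s * a)
      + ((g x - a) / (b - a)) * Real.exp (s * b)) μ := by
    apply Integrable.add
    · exact ((((integrable_const b).sub hgint).div_const (b - a)).mul_const _)
    · exact (((hgint.sub (integrable_const a)).div_const (b - a)).mul_const _)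
  have hlint : Integrable (fun x => Real.exp (s * g x)) μ := by
    apply integrable_of_bdd ((hg.const_mul s).exp.aestronglyMeasurable)
      (C := Real.exp (|s| * max |a| |b|))
    intro x
    rw [abs_of_pos (Real.exp_pos _), Real.exp_le_exp]
    calc s * g x ≤ |s * g x| := le_abs_self _
    _ = |s| * |g x| := abs_mul s (g x)
    _ ≤ |s| * max |a| |b| := by
        apply mul_le_mul_of_nonneg_left _ (abs_nonneg s)
        rw [abs_le]
        exact ⟨le_trans (neg_le_neg (le_max_left |a| |b|))
          (le_trans (neg_abs_le a) (hab x).1), le_trans (hab x).2 (le_trans (le_abs_self b)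
          (le_max_right |a| |b|))⟩
  have hint : (∫ x, Real.exp (s * g x) ∂μ) ≤
      (b / (b - a)) * Real.exp (s * a) + (-a / (b - a)) * Real.exp (s * b) := by
    calc (∫ x, Real.exp (s * g x) ∂μ) ≤ ∫ x, ((b - g x) / (b - a)) * Real.exp (s * a)
        + ((g x - a) / (b - a)) * Real.exp (s * b) ∂μ := integral_mono hlint hrint hconv
    _ = (b / (b - a)) * Real.exp (s * a) + (-a / (b - a)) * Real.exp (s * b) := by
        have hrew : ∀ x, ((b - g x) / (b - a)) * Real.exp (s * a)
            + ((g x - a) / (b - a)) * Real.exp (s * b)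
            = ((b / (b - a)) * Real.exp (s * a) + (-a / (b - a)) * Real.exp (s * b))
              + g x * ((Real.exp (s * b) - Real.exp (s * a)) / (b - a)) := by
          intro x; field_simp; ring
        simp_rw [hrew]
        rw [integral_add (integrable_const _) (hgint.mul_const _), integral_mul_const,
          hmean, integral_const]
        simp [measure_univ]
  -- algebraic finish
  have hkey : (b / (b - a)) * Real.exp (s * a) + (-a / (b - a)) * Real.exp (s * b)
      ≤ Real.exp (s ^ 2 * (b - a) ^ 2 / 8) := by
    have h1 : b / (b - a) = 1 - p := by rw [hp]; field_simp; ring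
    have h2 : Real.exp (s * b) = Real.exp (s * a) * Real.exp h := by
      rw [← Real.exp_add]; congr 1; rw [hh]; ring
    have h3 : s * a = -(p * h) := by
      rw [hp, hh]; field_simp
    calc (b / (b - a)) * Real.exp (s * a) + (-a / (b - a)) * Real.exp (s * b)
        = Real.exp (s * a) * (1 - p + p * Real.exp h) := by rw [h1, h2, hp]; ring
    _ ≤ Real.exp (s * a) * Real.exp (p * h + h ^ 2 / 8) := by
        apply mul_le_mul_of_nonneg_left (hoeffding_kernel hp0 hp1 h) (Real.exp_pos _).le
    _ = Real.exp (s * a + (p * h + h ^ 2 / 8)) := by rw [← Real.exp_add]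
    _ = Real.exp (s ^ 2 * (b - a) ^ 2 / 8) := by
        rw [h3]; congr 1; rw [hh]; ring
  linarith

/-- telescoping: bounded differences imply a global bound on oscillation -/
lemma bdd_diff_total {Z : Type*} {n : ℕ} (f : (Fin n → Z) → ℝ) (c : Fin n → ℝ)
    (hbd : ∀ (i : Fin n) (z z' : Fin n → Z), (∀ j, j ≠ i → z j = z' j) → |f z - f z'| ≤ c i)
    (z z' : Fin n → Z) : |f z - f z'| ≤ ∑ i, c i := by
  classical
  suffices H : ∀ s : Finset (Fin n), |f (s.piecewise z' z) - f z| ≤ ∑ i ∈ s, c i by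
    have := H Finset.univ
    rwa [Finset.piecewise_univ, abs_sub_comm] at this
  intro s
  induction s using Finset.induction_on with
  | empty => simp
  | @insert j s hj ih =>
    have hpw : (insert j s).piecewise z' z = Function.update (s.piecewise z' z) j (z' j) :=
      Finset.piecewise_insert _ _ _ _
    calc |f ((insert j s).piecewise z' z) - f z|
        ≤ |f ((insert j s).piecewise z' z) - f (s.piecewise z' z)|
          + |f (s.piecewise z' z) - f z| := abs_sub_le _ _ _
    _ ≤ c j + ∑ i ∈ s, c i := by
        refine add_le_add (hbd j _ _ (fun k hk => ?_)) ih
        rw [hpw, Function.update_of_ne hk]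
    _ = ∑ i ∈ insert j s, c i := (Finset.sum_insert hj).symm

/-- mgf bound for functions of independent coordinates (product measure version) -/
lemma mgf_pi_bound {Z : Type*} [MeasurableSpace Z] [Nonempty Z] :
    ∀ (n : ℕ) (μ : Fin n → Measure Z), (∀ i, IsProbabilityMeasure (μ i)) →
    ∀ (f : (Fin n → Z) → ℝ), Measurable f →
    ∀ (c : Fin n → ℝ),
    (∀ (i : Fin n) (z z' : Fin n → Z), (∀ j, j ≠ i → z j = z' j) → |f z - f z'| ≤ c i) →
    ∀ s : ℝ,
      (∫ z, Real.exp (s * (f z - ∫ z', f z' ∂(Measure.pi μ))) ∂(Measure.pi μ))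
        ≤ Real.exp (s ^ 2 * (∑ i, (c i) ^ 2) / 8) := by
  intro n
  induction n with
  | zero =>
    intro μ hμ f hf c hbd s
    haveI := hμ
    haveI : IsProbabilityMeasure (Measure.pi μ) := inferInstance
    have hconst : ∀ z : Fin 0 → Z, f z = f Fin.elim0 :=
      fun z => congrArg f (Subsingleton.elim _ _)
    have h1 : (∫ z', f z' ∂(Measure.pi μ)) = f Fin.elim0 := by
      have : (fun z' : Fin 0 → Z => f z') = fun _ => f Fin.elim0 := funext fun z => hconst z
      rw [this, integral_const]; simp [measure_univ]
    have h2 : ∀ z, Real.exp (s * (f z - ∫ z', f z' ∂(Measure.pi μ))) = 1 := by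
      intro z; rw [h1, hconst z]; simp
    simp only [h2]
    rw [integral_const]
    simp
  | succ n ih =>
    intro μ hμ f hf c hbd s
    haveI := hμ
    haveI : IsProbabilityMeasure (Measure.pi μ) := inferInstance
    haveI : ∀ j : Fin n, IsProbabilityMeasure (μ j.succ) := fun j => hμ j.succ
    set ν : Measure (Fin n → Z) := Measure.pi (fun j : Fin n => μ j.succ) with hν
    haveI : IsProbabilityMeasure ν := inferInstance
    set e := MeasurableEquiv.piFinSuccAbove (fun _ : Fin (n+1) => Z) 0 with he
    have hsymm : ∀ p : Z × (Fin n → Z), e.symm p = Fin.insertNth 0 p.1 p.2 := by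
      intro p
      simp [he, MeasurableEquiv.piFinSuccAbove_symm_apply, Fin.insertNthEquiv]
    have hmp : MeasurePreserving e (Measure.pi μ) ((μ 0).prod ν) :=
      measurePreserving_piFinSuccAbove μ 0
    -- transfer of integrals
    have htrans : ∀ (G : (Fin (n+1) → Z) → ℝ),
        (∫ z, G z ∂(Measure.pi μ)) =
          ∫ p : Z × (Fin n → Z), G (Fin.insertNth 0 p.1 p.2) ∂((μ 0).prod ν) := by
      intro G
      have h2 : (∫ z, (fun p : Z × (Fin n → Z) => G (Fin.insertNth 0 p.1 p.2)) (e z)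
            ∂(Measure.pi μ))
          = ∫ p : Z × (Fin n → Z), G (Fin.insertNth 0 p.1 p.2) ∂((μ 0).prod ν) :=
        hmp.integral_comp e.measurableEmbedding
          (fun p : Z × (Fin n → Z) => G (Fin.insertNth 0 p.1 p.2))
      rw [← h2]
      apply integral_congr_ae; filter_upwards with z
      show G z = G (Fin.insertNth 0 (e z).1 (e z).2)
      rw [show Fin.insertNth (0 : Fin (n+1)) (e z).1 (e z).2 = e.symm (e z) from
        (hsymm (e z)).symm, e.symm_apply_apply]
    -- measurability of the insertion map
    have hins : Measurable (fun p : Z × (Fin n → Z) =>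
        (Fin.insertNth (0 : Fin (n+1)) p.1 p.2 : Fin (n+1) → Z)) := by
      have : (fun p : Z × (Fin n → Z) => (Fin.insertNth (0 : Fin (n+1)) p.1 p.2 : Fin (n+1) → Z))
          = fun p => e.symm p := funext fun p => (hsymm p).symm
      rw [this]; exact e.symm.measurable
    have hF : Measurable (fun p : Z × (Fin n → Z) => f (Fin.insertNth 0 p.1 p.2)) :=
      hf.comp hins
    -- global bound on f
    obtain ⟨z₀⟩ : Nonempty (Fin (n+1) → Z) := inferInstance
    set B : ℝ := |f z₀| + ∑ i, c i with hB
    have hfb : ∀ z, |f z| ≤ B := by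
      intro z
      have h1 := bdd_diff_total f c hbd z z₀
      calc |f z| ≤ |f z - f z₀| + |f z₀| := by
            have := abs_sub_abs_le_abs_sub (f z) (f z₀); linarith [abs_sub_le (f z) (f z₀) 0,
              abs_add_le (f z - f z₀) (f z₀), congrArg abs (sub_add_cancel (f z) (f z₀))]
      _ ≤ B := by rw [hB]; linarith
    -- the conditional mean over the first coordinate
    set g : (Fin n → Z) → ℝ := fun y => ∫ x, f (Fin.insertNth 0 x y) ∂(μ 0) with hg
    have hgsm : StronglyMeasurable g :=
      StronglyMeasurable.integral_prod_left' (μ := μ 0) hF.stronglyMeasurable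
    have hsecint : ∀ y, Integrable (fun x => f (Fin.insertNth 0 x y)) (μ 0) := by
      intro y
      apply integrable_of_bdd (hF.comp (measurable_id.prodMk measurable_const)
        |>.aestronglyMeasurable) (C := B)
      exact fun x => hfb _
    have hgb : ∀ y, |g y| ≤ B := by
      intro y
      rw [hg]
      have := norm_integral_le_of_norm_le_const
        (μ := μ 0) (f := fun x => f (Fin.insertNth 0 x y)) (C := B)
        (Filter.Eventually.of_forall fun x => by simpa using hfb _)
      simpa [measure_univ] using this
    -- bounded differences for g
    have hgbd : ∀ (j : Fin n) (y y' : Fin n → Z), (∀ k, k ≠ j → y k = y' k) →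
        |g y - g y'| ≤ c j.succ := by
      intro j y y' hyy
      have hcoord : ∀ x : Z, ∀ k : Fin (n+1), k ≠ j.succ →
          (Fin.insertNth 0 x y : Fin (n+1) → Z) k = (Fin.insertNth 0 x y' : Fin (n+1) → Z) k := by
        intro x k hk
        induction k using Fin.cases with
        | zero => simp [Fin.insertNth_apply_same]
        | succ m =>
          have hm : m ≠ j := fun h => hk (by rw [h])
          have h1 : (Fin.insertNth 0 x y : Fin (n+1) → Z) m.succ = y m := by
            simpa using Fin.insertNth_apply_succAbove (0 : Fin (n+1)) x y m
          have h2 : (Fin.insertNth 0 x y' : Fin (n+1) → Z) m.succ = y' m := by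
            simpa using Fin.insertNth_apply_succAbove (0 : Fin (n+1)) x y' m
          rw [h1, h2, hyy m hm]
      have hdiff : ∀ x : Z, |f (Fin.insertNth 0 x y) - f (Fin.insertNth 0 x y')| ≤ c j.succ :=
        fun x => hbd j.succ _ _ (hcoord x)
      rw [hg]
      simp only []
      rw [← integral_sub (hsecint y) (hsecint y')]
      have := norm_integral_le_of_norm_le_const (μ := μ 0)
        (f := fun x => f (Fin.insertNth 0 x y) - f (Fin.insertNth 0 x y')) (C := c j.succ)
        (Filter.Eventually.of_forall fun x => by simpa using hdiff x)
      simpa [measure_univ] using this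
    -- inner Hoeffding bound
    have hinner : ∀ y : Fin n → Z,
        (∫ x, Real.exp (s * (f (Fin.insertNth 0 x y) - g y)) ∂(μ 0))
          ≤ Real.exp (s ^ 2 * (c 0) ^ 2 / 8) := by
      intro y
      have hbdd : BddAbove (Set.range fun x => f (Fin.insertNth 0 x y)) :=
        ⟨B, by rintro _ ⟨x, rfl⟩; exact le_trans (le_abs_self _) (hfb _)⟩
      set b : ℝ := (⨆ x, f (Fin.insertNth 0 x y)) - g y with hb
      have hmem : ∀ x, (f (Fin.insertNth 0 x y) - g y) ∈ Set.Icc (b - c 0) b := by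
        intro x
        constructor
        · have : (⨆ x', f (Fin.insertNth 0 x' y)) ≤ f (Fin.insertNth 0 x y) + c 0 := by
            apply ciSup_le
            intro x'
            have hc : ∀ k : Fin (n+1), k ≠ 0 →
                (Fin.insertNth 0 x' y : Fin (n+1) → Z) k
                  = (Fin.insertNth 0 x y : Fin (n+1) → Z) k := by
              intro k hk
              obtain ⟨m, rfl⟩ := Fin.exists_succ_eq.2 hk
              have a1 : (Fin.insertNth 0 x' y : Fin (n+1) → Z) m.succ = y m := by
                simpa using Fin.insertNth_apply_succAbove (0 : Fin (n+1)) x' y m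
              have a2 : (Fin.insertNth 0 x y : Fin (n+1) → Z) m.succ = y m := by
                simpa using Fin.insertNth_apply_succAbove (0 : Fin (n+1)) x y m
              rw [a1, a2]
            have := hbd 0 _ _ hc
            have := abs_le.1 this
            linarith [this.2]
          rw [hb]; linarith
        · rw [hb]
          have := le_ciSup hbdd x
          linarith
      have hmean : (∫ x, (f (Fin.insertNth 0 x y) - g y) ∂(μ 0)) = 0 := by
        rw [integral_sub (hsecint y) (integrable_const _), integral_const]
        simp [measure_univ, hg]
      have hmeas : Measurable (fun x => f (Fin.insertNth 0 x y) - g y) :=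
        (hF.comp (measurable_id.prodMk measurable_const)).sub measurable_const
      have := hoeffding_lemma (μ 0) hmeas hmem hmean s
      have heq : (b - (b - c 0)) = c 0 := by ring
      rwa [heq] at this
    -- m = ∫ f, and m = ∫ g ∂ν
    set m : ℝ := ∫ z, f z ∂(Measure.pi μ) with hm
    have hexpmeas : Measurable (fun p : Z × (Fin n → Z) =>
        Real.exp (s * (f (Fin.insertNth 0 p.1 p.2) - m))) :=
      ((hF.sub measurable_const).const_mul s).exp
    have hexpbd : ∀ p : Z × (Fin n → Z),
        |Real.exp (s * (f (Fin.insertNth 0 p.1 p.2) - m))| ≤ Real.exp (|s| * (2 * B)) := by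
      intro p
      rw [abs_of_pos (Real.exp_pos _), Real.exp_le_exp]
      have hmb : |m| ≤ B := by
        rw [hm]
        have := norm_integral_le_of_norm_le_const (μ := Measure.pi μ) (f := f) (C := B)
          (Filter.Eventually.of_forall fun z => by simpa using hfb z)
        simpa [measure_univ] using this
      calc s * (f (Fin.insertNth 0 p.1 p.2) - m) ≤ |s * (f (Fin.insertNth 0 p.1 p.2) - m)| :=
            le_abs_self _
      _ = |s| * |f (Fin.insertNth 0 p.1 p.2) - m| := abs_mul _ _
      _ ≤ |s| * (2 * B) := by
          apply mul_le_mul_of_nonneg_left _ (abs_nonneg s)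
          linarith [abs_sub (f (Fin.insertNth 0 p.1 p.2)) m,
            hfb (Fin.insertNth 0 p.1 p.2), hmb]
    have hexpint : Integrable (fun p : Z × (Fin n → Z) =>
        Real.exp (s * (f (Fin.insertNth 0 p.1 p.2) - m))) ((μ 0).prod ν) :=
      integrable_of_bdd hexpmeas.aestronglyMeasurable hexpbd
    have hmg : m = ∫ y, g y ∂ν := by
      rw [hm, htrans f, integral_prod_symm _ (by
        apply integrable_of_bdd hF.aestronglyMeasurable (C := B)
        exact fun p => hfb _)]
    -- main chain
    have step1 : (∫ z, Real.exp (s * (f z - m)) ∂(Measure.pi μ))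
        = ∫ y, (∫ x, Real.exp (s * (f (Fin.insertNth 0 x y) - m)) ∂(μ 0)) ∂ν := by
      rw [htrans (fun z => Real.exp (s * (f z - m)))]
      exact integral_prod_symm _ hexpint
    have hsplit : ∀ y x, Real.exp (s * (f (Fin.insertNth 0 x y) - m))
        = Real.exp (s * (g y - m)) * Real.exp (s * (f (Fin.insertNth 0 x y) - g y)) := by
      intro y x
      rw [← Real.exp_add]
      congr 1
      ring
    have step2 : ∀ y, (∫ x, Real.exp (s * (f (Fin.insertNth 0 x y) - m)) ∂(μ 0))
        ≤ Real.exp (s * (g y - m)) * Real.exp (s ^ 2 * (c 0) ^ 2 / 8) := by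
      intro y
      simp_rw [hsplit y]
      rw [integral_const_mul]
      exact mul_le_mul_of_nonneg_left (hinner y) (Real.exp_pos _).le
    -- integrate step2 over ν
    have houter_meas : Measurable (fun y => ∫ x,
        Real.exp (s * (f (Fin.insertNth 0 x y) - m)) ∂(μ 0)) := by
      have : StronglyMeasurable (fun y => ∫ x,
          Real.exp (s * (f (Fin.insertNth 0 x y) - m)) ∂(μ 0)) :=
        StronglyMeasurable.integral_prod_left' hexpmeas.stronglyMeasurable
      exact this.measurable
    have houter_bd : ∀ y, |∫ x, Real.exp (s * (f (Fin.insertNth 0 x y) - m)) ∂(μ 0)|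
        ≤ Real.exp (|s| * (2 * B)) := by
      intro y
      have := norm_integral_le_of_norm_le_const (μ := μ 0)
        (f := fun x => Real.exp (s * (f (Fin.insertNth 0 x y) - m)))
        (C := Real.exp (|s| * (2 * B)))
        (Filter.Eventually.of_forall fun x => by simpa using hexpbd (x, y))
      simpa [measure_univ] using this
    have hgexp_meas : Measurable (fun y => Real.exp (s * (g y - m))) :=
      ((hgsm.measurable.sub measurable_const).const_mul s).exp
    have hgexp_bd : ∀ y, |Real.exp (s * (g y - m))| ≤ Real.exp (|s| * (2 * B)) := by
      intro y
      rw [abs_of_pos (Real.exp_pos _), Real.exp_le_exp]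
      have hmb : |m| ≤ B := by
        rw [hm]
        have := norm_integral_le_of_norm_le_const (μ := Measure.pi μ) (f := f) (C := B)
          (Filter.Eventually.of_forall fun z => by simpa using hfb z)
        simpa [measure_univ] using this
      calc s * (g y - m) ≤ |s * (g y - m)| := le_abs_self _
      _ = |s| * |g y - m| := abs_mul _ _
      _ ≤ |s| * (2 * B) := by
          apply mul_le_mul_of_nonneg_left _ (abs_nonneg s)
          linarith [abs_sub (g y) m, hgb y, hmb]
    have step3 : (∫ y, (∫ x, Real.exp (s * (f (Fin.insertNth 0 x y) - m)) ∂(μ 0)) ∂ν)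
        ≤ ∫ y, Real.exp (s * (g y - m)) * Real.exp (s ^ 2 * (c 0) ^ 2 / 8) ∂ν := by
      apply integral_mono
      · exact integrable_of_bdd houter_meas.aestronglyMeasurable houter_bd
      · apply integrable_of_bdd (hgexp_meas.mul_const _).aestronglyMeasurable
          (C := Real.exp (|s| * (2 * B)) * Real.exp (s ^ 2 * (c 0) ^ 2 / 8))
        intro y
        rw [abs_mul, abs_of_pos (Real.exp_pos (s ^ 2 * (c 0) ^ 2 / 8))]
        exact mul_le_mul_of_nonneg_right (hgexp_bd y) (Real.exp_pos _).le
      · exact step2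
    have step4 : (∫ y, Real.exp (s * (g y - m)) * Real.exp (s ^ 2 * (c 0) ^ 2 / 8) ∂ν)
        = Real.exp (s ^ 2 * (c 0) ^ 2 / 8) * ∫ y, Real.exp (s * (g y - m)) ∂ν := by
      simp_rw [mul_comm]
      exact integral_const_mul _ _
    have hIH := ih (fun j : Fin n => μ j.succ) (fun j => hμ j.succ) g hgsm.measurable
      (fun j => c j.succ) hgbd s
    rw [← hν] at hIH
    rw [← hmg] at hIH
    calc (∫ z, Real.exp (s * (f z - m)) ∂(Measure.pi μ))
        ≤ Real.exp (s ^ 2 * (c 0) ^ 2 / 8) * ∫ y, Real.exp (s * (g y - m)) ∂ν := by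
          rw [step1]; rw [← step4]; exact step3
    _ ≤ Real.exp (s ^ 2 * (c 0) ^ 2 / 8) * Real.exp (s ^ 2 * (∑ j : Fin n, (c j.succ) ^ 2) / 8) :=
          mul_le_mul_of_nonneg_left hIH (Real.exp_pos _).le
    _ = Real.exp (s ^ 2 * (∑ i : Fin (n+1), (c i) ^ 2) / 8) := by
          rw [← Real.exp_add, Fin.sum_univ_succ]
          congr 1
          ring


/-- McDiarmid's bounded-differences inequality: if f has the bounded
differences property with constants cᵢ and Z₁,…,Zₙ are independent, then
P(f(Z₁,…,Zₙ) − E[f(Z₁,…,Zₙ)] ≥ t) ≤ exp(−2t²/∑ cᵢ²). -/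
theorem stmt_12 {Ω : Type*} [MeasureSpace Ω] [IsProbabilityMeasure (volume : Measure Ω)]
    {Z : Type*} [MeasurableSpace Z]
    (n : ℕ) (f : (Fin n → Z) → ℝ) (hfm : Measurable f) (c : Fin n → ℝ)
    (hbd : ∀ (i : Fin n) (z z' : Fin n → Z), (∀ j, j ≠ i → z j = z' j) →
      |f z - f z'| ≤ c i)
    (ξ : Fin n → Ω → Z) (hξm : ∀ i, Measurable (ξ i))
    (hind : iIndepFun ξ)
    (t : ℝ) (ht : 0 < t) :
    volume {ω | f (fun i => ξ i ω) - ∫ ω', f (fun i => ξ i ω') ≥ t} ≤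
      ENNReal.ofReal (Real.exp (-2 * t ^ 2 / ∑ i, (c i) ^ 2)) := by
  classical
  haveI hΩne : Nonempty Ω := by
    by_contra h
    rw [not_nonempty_iff] at h
    have h1 := measure_univ (μ := (volume : Measure Ω))
    rw [Set.univ_eq_empty_iff.2 h] at h1
    simp at h1
  by_cases hn : n = 0
  · -- degenerate case: f is constant
    subst hn
    have hconst : ∀ ω ω' : Ω, f (fun i => ξ i ω) = f (fun i => ξ i ω') :=
      fun ω ω' => congrArg f (Subsingleton.elim _ _)
    obtain ⟨ω₀⟩ := hΩne
    have hm : (∫ ω', f (fun i => ξ i ω')) = f (fun i => ξ i ω₀) := by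
      have : (fun ω' => f (fun i => ξ i ω')) = fun _ => f (fun i => ξ i ω₀) :=
        funext fun ω' => hconst ω' ω₀
      rw [this, integral_const]; simp
    have hempty : {ω | f (fun i => ξ i ω) - ∫ ω', f (fun i => ξ i ω') ≥ t} = ∅ := by
      ext ω
      simp only [Set.mem_setOf_eq, Set.mem_empty_iff_false, iff_false, not_le]
      rw [hm, hconst ω ω₀]
      simpa using ht
    rw [hempty]
    simp
  · haveI hZne : Nonempty Z := ⟨ξ ⟨0, Nat.pos_of_ne_zero hn⟩ (Classical.arbitrary Ω)⟩
    -- push forward to the product measure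
    set Φ : Ω → (Fin n → Z) := fun ω i => ξ i ω with hΦdef
    have hΦ : Measurable Φ := measurable_pi_iff.2 fun i => hξm i
    set μi : Fin n → Measure Z := fun i => Measure.map (ξ i) volume with hμi
    haveI : ∀ i, IsProbabilityMeasure (μi i) :=
      fun i => Measure.isProbabilityMeasure_map (hξm i).aemeasurable
    have hmap : Measure.map Φ volume = Measure.pi μi := by
      symm
      apply Measure.pi_eq
      intro s hs
      rw [Measure.map_apply hΦ (MeasurableSet.univ_pi hs)]
      have hpre : Φ ⁻¹' (Set.univ.pi s) = ⋂ i ∈ Finset.univ, ξ i ⁻¹' s i := by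
        ext ω
        simp [Set.mem_pi, hΦdef]
      rw [hpre, hind.measure_inter_preimage_eq_mul Finset.univ (fun i _ => hs i)]
      exact Finset.prod_congr rfl fun i _ =>
        (Measure.map_apply (hξm i) (hs i)).symm
    -- nonnegativity of the cᵢ
    have hc0 : ∀ i, 0 ≤ c i := fun i => by
      have := hbd i (Classical.arbitrary _) (Classical.arbitrary _) (fun j _ => rfl)
      simpa using le_trans (abs_nonneg _) this
    -- global bound on f
    obtain ⟨z₀⟩ : Nonempty (Fin n → Z) := inferInstance
    set B : ℝ := |f z₀| + ∑ i, c i with hB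
    have hfb : ∀ z, |f z| ≤ B := by
      intro z
      have h1 := bdd_diff_total f c hbd z z₀
      rw [hB]
      linarith [abs_sub (f z) (f z₀), abs_sub_abs_le_abs_sub (f z) (f z₀)]
    set m : ℝ := ∫ ω', f (fun i => ξ i ω') with hm
    have hmB : |m| ≤ B := by
      rw [hm]
      have := norm_integral_le_of_norm_le_const (μ := (volume : Measure Ω))
        (f := fun ω' => f (fun i => ξ i ω')) (C := B)
        (Filter.Eventually.of_forall fun ω' => by simpa using hfb _)
      simpa [measure_univ] using this
    -- m as an integral over the product measure
    have hfcomp : (fun ω' => f (fun i => ξ i ω')) = fun ω' => f (Φ ω') := rfl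
    have hmpi : m = ∫ z, f z ∂(Measure.pi μi) := by
      rw [hm, ← hmap, hfcomp]
      rw [integral_map hΦ.aemeasurable hfm.aestronglyMeasurable]
    set S : ℝ := ∑ i, (c i) ^ 2 with hS
    by_cases hS0 : S = 0
    · -- all cᵢ = 0: f is constant
      have hcall : ∀ i, c i = 0 := by
        intro i
        have hsum : ∀ j ∈ Finset.univ, (0:ℝ) ≤ (c j) ^ 2 := fun j _ => sq_nonneg _
        have h2 := (Finset.sum_eq_zero_iff_of_nonneg hsum).1 (by rw [← hS]; exact hS0) i
          (Finset.mem_univ i)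
        exact pow_eq_zero_iff (n := 2) (by norm_num) |>.1 h2
      have hsumc : (∑ i, c i) = 0 := Finset.sum_eq_zero fun i _ => hcall i
      have hconstf : ∀ z z' : Fin n → Z, f z = f z' := by
        intro z z'
        have h1 := bdd_diff_total f c hbd z z'
        rw [hsumc] at h1
        have h2 := abs_nonpos_iff.1 h1
        linarith [sub_eq_zero.1 h2]
      obtain ⟨ω₀⟩ := hΩne
      have hm0 : m = f (fun i => ξ i ω₀) := by
        rw [hm]
        have : (fun ω' => f (fun i => ξ i ω')) = fun _ => f (fun i => ξ i ω₀) :=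
          funext fun ω' => hconstf _ _
        rw [this, integral_const]; simp
      have hempty : {ω | f (fun i => ξ i ω) - ∫ ω', f (fun i => ξ i ω') ≥ t} = ∅ := by
        ext ω
        simp only [Set.mem_setOf_eq, Set.mem_empty_iff_false, iff_false, not_le]
        rw [← hm, hm0, hconstf (fun i => ξ i ω) (fun i => ξ i ω₀)]
        simpa using ht
      rw [hempty]
      simp
    · have hSpos : 0 < S := lt_of_le_of_ne (Finset.sum_nonneg fun i _ => sq_nonneg _)
        (Ne.symm hS0)
      set s : ℝ := 4 * t / S with hs
      have hs0 : 0 ≤ s := by positivity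
      set X : Ω → ℝ := fun ω => f (fun i => ξ i ω) - m with hX
      have hXm : Measurable X := (hfm.comp hΦ).sub measurable_const
      have hXb : ∀ ω, |X ω| ≤ 2 * B := by
        intro ω
        rw [hX]
        simp only []
        linarith [abs_sub (f (fun i => ξ i ω)) m, hfb (fun i => ξ i ω), hmB]
      have hint : Integrable (fun ω => Real.exp (s * X ω)) volume := by
        apply integrable_of_bdd ((hXm.const_mul s).exp).aestronglyMeasurable
          (C := Real.exp (|s| * (2 * B)))
        intro ω
        rw [abs_of_pos (Real.exp_pos _), Real.exp_le_exp]
        calc s * X ω ≤ |s * X ω| := le_abs_self _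
        _ = |s| * |X ω| := abs_mul _ _
        _ ≤ |s| * (2 * B) := mul_le_mul_of_nonneg_left (hXb ω) (abs_nonneg s)
      have hcher := measure_ge_le_exp_mul_mgf (μ := (volume : Measure Ω)) (X := X)
        (t := s) t hs0 hint
      -- bound the mgf
      have hmgf : mgf X volume s ≤ Real.exp (s ^ 2 * S / 8) := by
        have h1 : mgf X volume s = ∫ ω, Real.exp (s * X ω) := rfl
        have h2 : (∫ ω, Real.exp (s * X ω))
            = ∫ z, Real.exp (s * (f z - m)) ∂(Measure.pi μi) := by
          rw [← hmap, integral_map hΦ.aemeasurable (f := fun z => Real.exp (s * (f z - m)))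
            (((hfm.sub measurable_const).const_mul s).exp).aestronglyMeasurable]
        rw [h1, h2, hmpi]
        exact mgf_pi_bound n μi inferInstance f hfm c hbd s
      have hfinal : Real.exp (-s * t) * mgf X volume s ≤ Real.exp (-2 * t ^ 2 / S) := by
        calc Real.exp (-s * t) * mgf X volume s
            ≤ Real.exp (-s * t) * Real.exp (s ^ 2 * S / 8) :=
              mul_le_mul_of_nonneg_left hmgf (Real.exp_pos _).le
        _ = Real.exp (-s * t + s ^ 2 * S / 8) := (Real.exp_add _ _).symm
        _ = Real.exp (-2 * t ^ 2 / S) := by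
            congr 1
            rw [hs]
            field_simp
            ring
      have hev : {ω | f (fun i => ξ i ω) - ∫ ω', f (fun i => ξ i ω') ≥ t}
          = {ω | t ≤ X ω} := rfl
      rw [hev]
      have hne : volume {ω | t ≤ X ω} ≠ ⊤ := measure_ne_top _ _
      rw [← ENNReal.ofReal_toReal hne]
      apply ENNReal.ofReal_le_ofReal
      exact le_trans hcher hfinal
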